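/- Let m₀, m₁ ∈ ℕ₀, let x₀ < x₁ be real numbers, and let y_{0,0},…,y_{0,m₀}, y_{1,0},…,y_{1,m₁} ∈ ℝ. Let p be the (unique) polynomial of degree at most m₀ + m₁ + 1 satisfying p^{(j)}(x₀) = y_{0,j} for j ∈ {0,…,m₀} and p^{(j)}(x₁) = y_{1,j} for j ∈ {0,…,m₁}. If y_{0,j} ≥ 0 for all j ∈ {0,…,m₀} and (−1)^j·y_{1,j} ≥ 0 for all j ∈ {0,…,m₁}, then either p(x) > 0 for all x ∈ (x₀,x₁), or all the numbers y_{i,j} are zero and p is the zero polynomial. -/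

import Mathlib

open Polynomial Finset

lemma linmul_iter (c : ℝ) (q : ℝ[X]) (j : ℕ) :
    derivative^[j+1] ((X - C c) * q) =
      (X - C c) * derivative^[j+1] q + C ((j:ℝ)+1) * derivative^[j] q := by
  induction j with
  | zero => simp [derivative_mul]; ring
  | succ i ih =>
    rw [Function.iterate_succ_apply', ih]
    simp [derivative_mul, Function.iterate_succ_apply']
    ring

lemma linmul_iter_eval (c : ℝ) (q : ℝ[X]) (j : ℕ) (t : ℝ) :
    (derivative^[j+1] ((X - C c) * q)).eval t =
      (t - c) * (derivative^[j+1] q).eval t + ((j:ℝ)+1) * (derivative^[j] q).eval t := by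
  simp [linmul_iter]

lemma iter_deriv_C_add (a : ℝ) (f : ℝ[X]) (j : ℕ) :
    derivative^[j+1] (C a + f) = derivative^[j+1] f := by
  rw [Function.iterate_succ_apply, Function.iterate_succ_apply]
  simp
lemma eval_taylor_sum (q : ℝ[X]) (a : ℝ) (m : ℕ) (hd : q.natDegree ≤ m) (x : ℝ) :
    q.eval x = ∑ i ∈ range (m+1),
      (derivative^[i] q).eval a / (i.factorial : ℝ) * (x - a)^i := by
  have h1 : q.eval x = (taylor a q).eval (x - a) := by
    rw [taylor_eval_sub]
  have h2 : (taylor a q).natDegree < m + 1 := by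
    rw [natDegree_taylor]; omega
  rw [h1, eval_eq_sum_range' h2]
  refine Finset.sum_congr rfl fun i _ => ?_
  congr 1
  rw [taylor_coeff]
  have := congrFun (factorial_smul_hasseDeriv (R := ℝ) i) q
  simp only [LinearMap.smul_apply] at this
  have h3 : (i.factorial : ℝ) • (hasseDeriv i q).eval a = (derivative^[i] q).eval a := by
    rw [← this]; simp
  have hfac : (i.factorial : ℝ) ≠ 0 := by positivity
  field_simp
  rw [← h3]
  simp [mul_comm]

lemma zero_of_derivs_zero (q : ℝ[X]) (a : ℝ) (m : ℕ) (hd : q.natDegree ≤ m)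
    (h : ∀ j ≤ m, (derivative^[j] q).eval a = 0) : q = 0 := by
  have ht : taylor a q = 0 := by
    ext i
    rcases le_or_gt i m with hi | hi
    · rw [taylor_coeff, coeff_zero]
      have := congrFun (factorial_smul_hasseDeriv (R := ℝ) i) q
      simp only [LinearMap.smul_apply] at this
      have h3 : (i.factorial : ℝ) • (hasseDeriv i q).eval a = (derivative^[i] q).eval a := by
        rw [← this]; simp
      rw [h i hi] at h3
      have hfac : (i.factorial : ℝ) ≠ 0 := by positivity
      simpa [smul_eq_mul, hfac] using h3
    · rw [coeff_zero]
      apply coeff_eq_zero_of_natDegree_lt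
      rw [natDegree_taylor]; omega
  exact taylor_injective a (by simpa using ht)

lemma taylor_pos_left (q : ℝ[X]) (a : ℝ) (m : ℕ) (hd : q.natDegree ≤ m)
    (h : ∀ j ≤ m, 0 ≤ (derivative^[j] q).eval a) (hq : q ≠ 0) :
    ∀ x, a < x → 0 < q.eval x := by
  intro x hx
  obtain ⟨j₀, hj₀, hne⟩ : ∃ j ≤ m, (derivative^[j] q).eval a ≠ 0 := by
    by_contra hc
    push_neg at hc
    exact hq (zero_of_derivs_zero q a m hd hc)
  rw [eval_taylor_sum q a m hd x]
  apply Finset.sum_pos'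
  · intro i hi
    rw [Finset.mem_range] at hi
    have hxa : (0:ℝ) ≤ x - a := by linarith
    have h1 := h i (by omega)
    positivity
  · refine ⟨j₀, Finset.mem_range.mpr (by omega), ?_⟩
    have h1 := h j₀ hj₀
    have h2 : (0:ℝ) < (derivative^[j₀] q).eval a := lt_of_le_of_ne h1 (Ne.symm hne)
    have hxa : (0:ℝ) < x - a := by linarith
    positivity

lemma taylor_pos_right (q : ℝ[X]) (a : ℝ) (m : ℕ) (hd : q.natDegree ≤ m)
    (h : ∀ j ≤ m, 0 ≤ (-1:ℝ)^j * (derivative^[j] q).eval a) (hq : q ≠ 0) :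
    ∀ x, x < a → 0 < q.eval x := by
  intro x hx
  obtain ⟨j₀, hj₀, hne⟩ : ∃ j ≤ m, (derivative^[j] q).eval a ≠ 0 := by
    by_contra hc
    push_neg at hc
    exact hq (zero_of_derivs_zero q a m hd hc)
  rw [eval_taylor_sum q a m hd x]
  have key : ∀ i, (derivative^[i] q).eval a / (i.factorial : ℝ) * (x - a)^i
      = ((-1:ℝ)^i * (derivative^[i] q).eval a) / (i.factorial : ℝ) * (a - x)^i := by
    intro i
    have hpow : (x - a)^i = (-1:ℝ)^i * (a - x)^i := by
      rw [← mul_pow]; ring_nf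
    rw [hpow]; ring
  simp only [key]
  apply Finset.sum_pos'
  · intro i hi
    rw [Finset.mem_range] at hi
    have hxa : (0:ℝ) ≤ a - x := by linarith
    have h1 := h i (by omega)
    positivity
  · refine ⟨j₀, Finset.mem_range.mpr (by omega), ?_⟩
    have h1 := h j₀ hj₀
    have h2 : (0:ℝ) < (-1:ℝ)^j₀ * (derivative^[j₀] q).eval a := by
      rcases lt_or_eq_of_le h1 with h' | h'
      · exact h'
      · exfalso; apply hne
        have : ((-1:ℝ)^j₀) ≠ 0 := by positivity
        field_simp at h'
        exact (mul_eq_zero.mp h'.symm).resolve_left this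
    have hxa : (0:ℝ) < a - x := by linarith
    positivity
lemma hermite_exists (n : ℕ) : ∀ (m₀ m₁ : ℕ), m₀ + m₁ ≤ n → ∀ (x₀ x₁ : ℝ), x₀ ≠ x₁ →
    ∀ (y₀ y₁ : ℕ → ℝ),
    ∃ p : ℝ[X], p.natDegree ≤ m₀ + m₁ + 1 ∧
      (∀ j ≤ m₀, (derivative^[j] p).eval x₀ = y₀ j) ∧
      (∀ j ≤ m₁, (derivative^[j] p).eval x₁ = y₁ j) := by
  induction n using Nat.strong_induction_on with
  | _ n IH =>
    intro m₀ m₁ hn x₀ x₁ hne y₀ y₁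
    have hd : x₁ - x₀ ≠ 0 := sub_ne_zero.mpr (Ne.symm hne)
    match m₀ with
    | s + 1 =>
      -- reduce m₀
      set z₁ : ℕ → ℝ := fun j => Nat.rec ((y₁ 0 - y₀ 0)/(x₁ - x₀))
        (fun i z => (y₁ (i+1) - ((i:ℝ)+1) * z)/(x₁ - x₀)) j with hz₁
      obtain ⟨q, hqd, hq0, hq1⟩ := IH (s + m₁) (by omega) s m₁ le_rfl x₀ x₁ hne
        (fun j => y₀ (j+1) / ((j:ℝ)+1)) z₁
      refine ⟨C (y₀ 0) + (X - C x₀) * q, ?_, ?_, ?_⟩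
      · apply le_trans (natDegree_add_le _ _)
        simp only [natDegree_C, max_le_iff]
        constructor
        · omega
        · apply le_trans (natDegree_mul_le)
          rw [natDegree_X_sub_C]
          omega
      · intro j hj
        match j with
        | 0 => simp
        | i + 1 =>
          rw [iter_deriv_C_add, linmul_iter_eval]
          have := hq0 i (by omega)
          rw [this]
          have : ((i:ℝ)+1) ≠ 0 := by positivity
          field_simp
          ring
      · intro j hj
        match j with
        | 0 =>
          have h00 := hq1 0 (by omega)
          simp only [Function.iterate_zero, id_eq] at h00
          simp only [Function.iterate_zero, id_eq, eval_add, eval_mul, eval_C, eval_sub, eval_X]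
          rw [h00]
          show y₀ 0 + (x₁ - x₀) * ((y₁ 0 - y₀ 0)/(x₁ - x₀)) = y₁ 0
          field_simp
          ring
        | i + 1 =>
          rw [iter_deriv_C_add, linmul_iter_eval]
          rw [hq1 (i+1) (by omega), hq1 i (by omega)]
          show (x₁ - x₀) * ((y₁ (i+1) - ((i:ℝ)+1) * z₁ i)/(x₁ - x₀)) + ((i:ℝ)+1) * z₁ i = y₁ (i+1)
          field_simp
          ring
    | 0 =>
      match m₁ with
      | s + 1 =>
        -- reduce m₁
        set z₁ : ℕ → ℝ := fun j => y₁ (j+1) / ((j:ℝ)+1) with hz₁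
        obtain ⟨q, hqd, hq0, hq1⟩ := IH s (by omega) 0 s (by omega) x₀ x₁ hne
          (fun _ => (y₀ 0 - y₁ 0)/(x₀ - x₁)) z₁
        refine ⟨C (y₁ 0) + (X - C x₁) * q, ?_, ?_, ?_⟩
        · apply le_trans (natDegree_add_le _ _)
          simp only [natDegree_C, max_le_iff]
          constructor
          · omega
          · apply le_trans (natDegree_mul_le)
            rw [natDegree_X_sub_C]
            omega
        · intro j hj
          interval_cases j
          have h00 := hq0 0 (by omega)
          simp only [Function.iterate_zero, id_eq] at h00
          simp only [Function.iterate_zero, id_eq, eval_add, eval_mul, eval_C, eval_sub, eval_X]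
          rw [h00]
          show y₁ 0 + (x₀ - x₁) * ((y₀ 0 - y₁ 0)/(x₀ - x₁)) = y₀ 0
          have hd' : x₀ - x₁ ≠ 0 := sub_ne_zero.mpr hne
          field_simp
          ring
        · intro j hj
          match j with
          | 0 => simp
          | i + 1 =>
            rw [iter_deriv_C_add, linmul_iter_eval]
            rw [hq1 i (by omega)]
            show (x₁ - x₁) * _ + ((i:ℝ)+1) * (y₁ (i+1) / ((i:ℝ)+1)) = y₁ (i+1)
            have : ((i:ℝ)+1) ≠ 0 := by positivity
            field_simp
            ring
      | 0 =>
        refine ⟨C (y₀ 0) + C ((y₁ 0 - y₀ 0)/(x₁ - x₀)) * (X - C x₀), ?_, ?_, ?_⟩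
        · apply le_trans (natDegree_add_le _ _)
          simp only [natDegree_C, max_le_iff]
          refine ⟨by omega, ?_⟩
          apply le_trans (natDegree_mul_le)
          simp [natDegree_X_sub_C]
        · intro j hj
          interval_cases j
          simp
        · intro j hj
          interval_cases j
          simp only [Function.iterate_zero, id_eq, eval_add, eval_mul, eval_C, eval_sub, eval_X]
          field_simp
          ring
lemma hermite_key (n : ℕ) : ∀ (m₀ m₁ : ℕ), m₀ + m₁ ≤ n → ∀ (x₀ x₁ : ℝ), x₀ < x₁ →
    ∀ p : ℝ[X], p.natDegree ≤ m₀ + m₁ + 1 →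
    (∀ j ≤ m₀, 0 ≤ (derivative^[j] p).eval x₀) →
    (∀ j ≤ m₁, 0 ≤ (-1:ℝ)^j * (derivative^[j] p).eval x₁) →
    (∀ x ∈ Set.Ioo x₀ x₁, 0 < p.eval x) ∨ p = 0 := by
  induction n using Nat.strong_induction_on with
  | _ n IH =>
    intro m₀ m₁ hn x₀ x₁ hx
    have hd : (0:ℝ) < x₁ - x₀ := sub_pos.mpr hx
    -- Sub-lemma 1: case p(x₀) = 0
    have SL1 : ∀ p : ℝ[X], p.natDegree ≤ m₀ + m₁ + 1 →
        (∀ j ≤ m₀, 0 ≤ (derivative^[j] p).eval x₀) →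
        (∀ j ≤ m₁, 0 ≤ (-1:ℝ)^j * (derivative^[j] p).eval x₁) →
        p.eval x₀ = 0 →
        (∀ x ∈ Set.Ioo x₀ x₁, 0 < p.eval x) ∨ p = 0 := by
      intro p hdeg h0 h1 hroot
      obtain ⟨q, hq⟩ : (X - C x₀) ∣ p := dvd_iff_isRoot.mpr hroot
      by_cases hq0 : q = 0
      · right; rw [hq, hq0, mul_zero]
      have hdq : q.natDegree ≤ m₀ + m₁ := by
        have h' := natDegree_mul (X_sub_C_ne_zero x₀) hq0
        rw [← hq, natDegree_X_sub_C] at h'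
        omega
      have hev : ∀ (j : ℕ) (t : ℝ), (derivative^[j+1] p).eval t =
          (t - x₀) * (derivative^[j+1] q).eval t + ((j:ℝ)+1) * (derivative^[j] q).eval t := by
        intro j t; rw [hq]; exact linmul_iter_eval x₀ q j t
      have hpe : ∀ t : ℝ, p.eval t = (t - x₀) * q.eval t := by
        intro t; rw [hq]; simp
      have hsign1 : ∀ j ≤ m₁, 0 ≤ (-1:ℝ)^j * (derivative^[j] q).eval x₁ := by
        intro j
        induction j with
        | zero =>
          intro _
          have h1' := h1 0 (by omega)
          have he := hpe x₁
          simp only [pow_zero, one_mul, Function.iterate_zero, id_eq] at h1' ⊢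
          nlinarith
        | succ i ihs =>
          intro hji
          have hprev := ihs (by omega)
          have h1' := h1 (i+1) hji
          have he := hev i x₁
          have key2 : (x₁ - x₀) * ((-1:ℝ)^(i+1) * (derivative^[i+1] q).eval x₁) =
              (-1:ℝ)^(i+1) * (derivative^[i+1] p).eval x₁
                + ((i:ℝ)+1) * ((-1:ℝ)^i * (derivative^[i] q).eval x₁) := by
            rw [he]; ring
          have hcast : (0:ℝ) ≤ (i:ℝ) + 1 := by positivity
          nlinarith [mul_nonneg hcast hprev]
      by_cases hm₀ : m₀ = 0
      · left
        intro x hxm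
        have hqpos := taylor_pos_right q x₁ m₁ (by omega) hsign1 hq0 x hxm.2
        rw [hpe x]
        exact mul_pos (sub_pos.mpr hxm.1) hqpos
      · obtain ⟨k, hk⟩ : ∃ k, m₀ = k + 1 := ⟨m₀ - 1, by omega⟩
        have hsign0 : ∀ j ≤ k, 0 ≤ (derivative^[j] q).eval x₀ := by
          intro j hj
          have h0' := h0 (j+1) (by omega)
          have he := hev j x₀
          have hj1 : (0:ℝ) < (j:ℝ) + 1 := by positivity
          nlinarith
        rcases IH (k + m₁) (by omega) k m₁ le_rfl x₀ x₁ hx q (by omega) hsign0 hsign1 with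
          hpos | hz
        · left; intro x hxm; rw [hpe x]
          exact mul_pos (sub_pos.mpr hxm.1) (hpos x hxm)
        · exact absurd hz hq0
    -- Sub-lemma 2: case p(x₁) = 0
    have SL2 : ∀ p : ℝ[X], p.natDegree ≤ m₀ + m₁ + 1 →
        (∀ j ≤ m₀, 0 ≤ (derivative^[j] p).eval x₀) →
        (∀ j ≤ m₁, 0 ≤ (-1:ℝ)^j * (derivative^[j] p).eval x₁) →
        p.eval x₁ = 0 →
        (∀ x ∈ Set.Ioo x₀ x₁, 0 < p.eval x) ∨ p = 0 := by
      intro p hdeg h0 h1 hroot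
      obtain ⟨q, hq⟩ : (X - C x₁) ∣ p := dvd_iff_isRoot.mpr hroot
      by_cases hq0 : q = 0
      · right; rw [hq, hq0, mul_zero]
      have hdq : q.natDegree ≤ m₀ + m₁ := by
        have h' := natDegree_mul (X_sub_C_ne_zero x₁) hq0
        rw [← hq, natDegree_X_sub_C] at h'
        omega
      have hev : ∀ (j : ℕ) (t : ℝ), (derivative^[j+1] p).eval t =
          (t - x₁) * (derivative^[j+1] q).eval t + ((j:ℝ)+1) * (derivative^[j] q).eval t := by
        intro j t; rw [hq]; exact linmul_iter_eval x₁ q j t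
      have hpe : ∀ t : ℝ, p.eval t = (x₁ - t) * (- q.eval t) := by
        intro t; rw [hq]; simp; ring
      have hsign0 : ∀ j ≤ m₀, 0 ≤ -((derivative^[j] q).eval x₀) := by
        intro j
        induction j with
        | zero =>
          intro _
          have h0' := h0 0 (by omega)
          have he := hpe x₀
          simp only [Function.iterate_zero, id_eq] at h0' ⊢
          nlinarith
        | succ i ihs =>
          intro hji
          have hprev := ihs (by omega)
          have h0' := h0 (i+1) hji
          have he := hev i x₀
          have key2 : (x₁ - x₀) * (-((derivative^[i+1] q).eval x₀)) =
              (derivative^[i+1] p).eval x₀ + ((i:ℝ)+1) * (-((derivative^[i] q).eval x₀)) := by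
            rw [he]; ring
          have hcast : (0:ℝ) ≤ (i:ℝ) + 1 := by positivity
          nlinarith [mul_nonneg hcast hprev]
      have hsign1 : ∀ j, j + 1 ≤ m₁ → 0 ≤ (-1:ℝ)^j * (-((derivative^[j] q).eval x₁)) := by
        intro j hj
        have h1' := h1 (j+1) hj
        have he := hev j x₁
        have key2 : ((j:ℝ)+1) * ((-1:ℝ)^j * (-((derivative^[j] q).eval x₁))) =
            (-1:ℝ)^(j+1) * (derivative^[j+1] p).eval x₁ := by
          rw [he]; ring
        have hj1 : (0:ℝ) < (j:ℝ) + 1 := by positivity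
        nlinarith
      by_cases hm₁ : m₁ = 0
      · left
        intro x hxm
        have hnq : -q ≠ 0 := fun h => hq0 (by simpa using congrArg Neg.neg h)
        have hqpos := taylor_pos_left (-q) x₀ m₀ (by rw [natDegree_neg]; omega)
          (by intro j hj
              have := hsign0 j hj
              simpa [iterate_derivative_neg] using this)
          hnq x hxm.1
        rw [hpe x]
        have : (-q).eval x = -(q.eval x) := by simp
        rw [this] at hqpos
        exact mul_pos (sub_pos.mpr hxm.2) hqpos
      · obtain ⟨k, hk⟩ : ∃ k, m₁ = k + 1 := ⟨m₁ - 1, by omega⟩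
        have h0' : ∀ j ≤ m₀, 0 ≤ (derivative^[j] (-q)).eval x₀ := by
          intro j hj; simpa [iterate_derivative_neg] using hsign0 j hj
        have h1' : ∀ j ≤ k, 0 ≤ (-1:ℝ)^j * (derivative^[j] (-q)).eval x₁ := by
          intro j hj; simpa [iterate_derivative_neg] using hsign1 j (by omega)
        have hnq : -q ≠ 0 := fun h => hq0 (by simpa using congrArg Neg.neg h)
        rcases IH (m₀ + k) (by omega) m₀ k le_rfl x₀ x₁ hx (-q)
            (by rw [natDegree_neg]; omega) h0' h1' with hpos | hz
        · left; intro x hxm; rw [hpe x]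
          have := hpos x hxm
          simp only [eval_neg] at this
          exact mul_pos (sub_pos.mpr hxm.2) this
        · exact absurd hz hnq
    -- main flow
    intro p hdeg h0 h1
    by_cases hp0 : p.eval x₀ = 0
    · exact SL1 p hdeg h0 h1 hp0
    by_cases hp1 : p.eval x₁ = 0
    · exact SL2 p hdeg h0 h1 hp1
    have hp0' : 0 < p.eval x₀ := by
      have := h0 0 (by omega)
      simp only [Function.iterate_zero, id_eq] at this
      exact lt_of_le_of_ne this (Ne.symm hp0)
    obtain ⟨w, hwdeg, hw0, hw1⟩ := hermite_exists (m₀+m₁) m₀ m₁ le_rfl x₀ x₁ (ne_of_lt hx)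
      (fun j => if j = 0 then 1 else 0) (fun _ => 0)
    have hw0' : ∀ j ≤ m₀, 0 ≤ (derivative^[j] w).eval x₀ := by
      intro j hj; rw [hw0 j hj]; split <;> norm_num
    have hw1' : ∀ j ≤ m₁, 0 ≤ (-1:ℝ)^j * (derivative^[j] w).eval x₁ := by
      intro j hj; rw [hw1 j hj]; simp
    have hwx1 : w.eval x₁ = 0 := by
      have := hw1 0 (by omega); simpa using this
    have hwx0 : w.eval x₀ = 1 := by
      have := hw0 0 (by omega); simpa using this
    have hwpos : ∀ x ∈ Set.Ioo x₀ x₁, 0 < w.eval x := by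
      rcases SL2 w hwdeg hw0' hw1' hwx1 with h | h
      · exact h
      · rw [h] at hwx0; simp at hwx0
    set a := p.eval x₀ with ha
    set Q := p - C a * w with hQdef
    have hQev : ∀ (j : ℕ) (t : ℝ), (derivative^[j] Q).eval t =
        (derivative^[j] p).eval t - a * (derivative^[j] w).eval t := by
      intro j t
      rw [hQdef, iterate_derivative_sub, iterate_derivative_C_mul]
      simp
    have hQdeg : Q.natDegree ≤ m₀ + m₁ + 1 := by
      apply le_trans (natDegree_sub_le _ _)
      apply max_le hdeg
      apply le_trans natDegree_mul_le
      simp only [natDegree_C]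
      omega
    have hQ0 : ∀ j ≤ m₀, 0 ≤ (derivative^[j] Q).eval x₀ := by
      intro j hj
      rw [hQev, hw0 j hj]
      match j with
      | 0 => simp; exact ha.le
      | i + 1 =>
        simp only [if_neg (Nat.succ_ne_zero i), mul_zero, sub_zero]
        exact h0 (i+1) hj
    have hQ1 : ∀ j ≤ m₁, 0 ≤ (-1:ℝ)^j * (derivative^[j] Q).eval x₁ := by
      intro j hj
      rw [hQev, hw1 j hj]
      simpa using h1 j hj
    have hQx0 : Q.eval x₀ = 0 := by
      have := hQev 0 x₀
      simp only [Function.iterate_zero, id_eq] at this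
      rw [this, hwx0]; ring
    have hpeval : ∀ x : ℝ, p.eval x = Q.eval x + a * w.eval x := by
      intro x; rw [hQdef]; simp
    rcases SL1 Q hQdeg hQ0 hQ1 hQx0 with hq | hq
    · left; intro x hxm
      rw [hpeval x]
      have := hq x hxm
      have := hwpos x hxm
      nlinarith
    · left; intro x hxm
      rw [hpeval x, hq]
      simp only [eval_zero, zero_add]
      exact mul_pos hp0' (hwpos x hxm)

/-- **Lemma (positivity of two-point Hermite interpolation).** Let `p` be a real polynomial
of degree at most `m₀ + m₁ + 1` with `p⁽ʲ⁾(x₀) = y₀ⱼ` for `j ≤ m₀` and `p⁽ʲ⁾(x₁) = y₁ⱼ`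
for `j ≤ m₁`, where `x₀ < x₁`. If `y₀ⱼ ≥ 0` for all `j ≤ m₀` and `(−1)ʲ y₁ⱼ ≥ 0` for all
`j ≤ m₁`, then either `p > 0` on `(x₀, x₁)`, or all `yᵢⱼ` vanish and `p = 0`. -/
theorem hermite_interpolation_positivity
    (m₀ m₁ : ℕ) (x₀ x₁ : ℝ) (hx : x₀ < x₁)
    (y₀ y₁ : ℕ → ℝ) (p : Polynomial ℝ)
    (hdeg : p.natDegree ≤ m₀ + m₁ + 1)
    (h0 : ∀ j ≤ m₀, (Polynomial.derivative^[j] p).eval x₀ = y₀ j)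
    (h1 : ∀ j ≤ m₁, (Polynomial.derivative^[j] p).eval x₁ = y₁ j)
    (hy0 : ∀ j ≤ m₀, 0 ≤ y₀ j)
    (hy1 : ∀ j ≤ m₁, 0 ≤ (-1 : ℝ) ^ j * y₁ j) :
    (∀ x ∈ Set.Ioo x₀ x₁, 0 < p.eval x) ∨
      ((∀ j ≤ m₀, y₀ j = 0) ∧ (∀ j ≤ m₁, y₁ j = 0) ∧ p = 0) := by
  rcases hermite_key (m₀ + m₁) m₀ m₁ le_rfl x₀ x₁ hx p hdeg
      (fun j hj => by rw [h0 j hj]; exact hy0 j hj)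
      (fun j hj => by rw [h1 j hj]; exact hy1 j hj) with hpos | hz
  · exact Or.inl hpos
  · refine Or.inr ⟨fun j hj => ?_, fun j hj => ?_, hz⟩
    · rw [← h0 j hj, hz, iterate_derivative_zero, eval_zero]
    · rw [← h1 j hj, hz, iterate_derivative_zero, eval_zero]
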